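/- Fix a nonnegative integer l and set t_j = j/n for j=1,…,n. There exists a constant C' (depending only on K, L and l) such that for all n ≥ 1, all b with 0 < b ≤ 1 and nb ≥ 1, and uniformly over all t ∈ [0,1], |n^{-1}∑_{j=1}^n K_b(t_j−t)((t_j−t)/b)^l − ∫_{−t/b}^{(1−t)/b} K(u)u^l du| ≤ C'/(nb); in particular, uniformly over indices i with nbL ≤ i ≤ n−nbL, n^{-1}∑_{j=1}^n K_b(t_j−t_i)(t_j−t_i)^l = b^l{∫_{−L}^{L} K(u)u^l du + O(1/(nb))}. -/

import Mathlib

open MeasureTheory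

noncomputable section


lemma pow_lip {L : ℝ} (hL : 0 ≤ L) (l : ℕ) :
    ∀ x y : ℝ, |x| ≤ L → |y| ≤ L → |x ^ l - y ^ l| ≤ l * L ^ (l - 1) * |x - y| := by
  induction l with
  | zero => intro x y _ _; simp
  | succ m ih =>
    intro x y hx hy
    have hsplit : x ^ (m + 1) - y ^ (m + 1) = x * (x ^ m - y ^ m) + (x - y) * y ^ m := by ring
    have h1 : |x ^ (m + 1) - y ^ (m + 1)| ≤ |x| * |x ^ m - y ^ m| + |x - y| * |y| ^ m := by
      rw [hsplit]
      calc |x * (x ^ m - y ^ m) + (x - y) * y ^ m|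
          ≤ |x * (x ^ m - y ^ m)| + |(x - y) * y ^ m| := abs_add_le _ _
        _ = |x| * |x ^ m - y ^ m| + |x - y| * |y| ^ m := by rw [abs_mul, abs_mul, abs_pow]
    have h2 : |x| * |x ^ m - y ^ m| ≤ L * (m * L ^ (m - 1) * |x - y|) := by
      apply mul_le_mul hx (ih x y hx hy) (abs_nonneg _) hL
    have h3 : |x - y| * |y| ^ m ≤ |x - y| * L ^ m :=
      mul_le_mul_of_nonneg_left (pow_le_pow_left₀ (abs_nonneg _) hy m) (abs_nonneg _)
    have h4 : L * (m * L ^ (m - 1)) ≤ m * L ^ m := by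
      cases m with
      | zero => simp
      | succ k =>
        rw [Nat.add_sub_cancel, mul_comm L _, mul_assoc, ← pow_succ]
    calc |x ^ (m + 1) - y ^ (m + 1)| ≤ L * (m * L ^ (m - 1) * |x - y|) + |x - y| * L ^ m := by
          linarith
      _ ≤ (m : ℝ) * L ^ m * |x - y| + L ^ m * |x - y| := by
          nlinarith [abs_nonneg (x - y), h4]
      _ = ((m + 1 : ℕ) : ℝ) * L ^ ((m + 1) - 1) * |x - y| := by push_cast; ring

lemma f_lip {K : ℝ → ℝ} {L : ℝ} (hL : 0 < L) (CK : NNReal) (hK_lip : LipschitzWith CK K)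
    {CB : ℝ} (hK_bdd : ∀ t, K t ≤ CB) (hK_nonneg : ∀ t, 0 ≤ K t)
    (hK_supp : ∀ t, L < |t| → K t = 0) (l : ℕ) :
    ∀ u v : ℝ, |K u * u ^ l - K v * v ^ l| ≤ ((CK : ℝ) * L ^ l + CB * l * L ^ (l - 1)) * |u - v| := by
  have hCB : (0:ℝ) ≤ CB := le_trans (hK_nonneg 0) (hK_bdd 0)
  set c : ℝ → ℝ := fun x => max (min x L) (-L) with hc
  have hcabs : ∀ x, |c x| ≤ L := fun x => abs_le.mpr
    ⟨le_max_right _ _, max_le (min_le_right x L) (by linarith)⟩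
  have hclip : ∀ x y, |c x - c y| ≤ |x - y| := by
    intro x y
    refine (abs_max_sub_max_le_abs _ _ _).trans ?_
    refine (abs_min_sub_min_le_max x L y L).trans ?_
    simp [abs_nonneg]
  have hfc2 : ∀ x, K x * x ^ l = K x * (c x) ^ l := by
    intro x
    rcases le_or_gt |x| L with h | h
    · have hx := abs_le.mp h
      have : c x = x := by
        simp only [hc]
        rw [min_eq_left hx.2, max_eq_left (by linarith [hx.1])]
      rw [this]
    · rw [hK_supp x h]; ring
  intro u v
  rw [hfc2 u, hfc2 v]
  have key : K u * c u ^ l - K v * c v ^ l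
      = K u * (c u ^ l - c v ^ l) + (K u - K v) * c v ^ l := by ring
  rw [key]
  have h1 : |K u * (c u ^ l - c v ^ l)| ≤ CB * (l * L ^ (l - 1) * |u - v|) := by
    rw [abs_mul]
    apply mul_le_mul
    · rw [abs_of_nonneg (hK_nonneg u)]; exact hK_bdd u
    · exact (pow_lip hL.le l _ _ (hcabs u) (hcabs v)).trans
        (mul_le_mul_of_nonneg_left (hclip u v) (by positivity))
    · exact abs_nonneg _
    · exact hCB
  have h2 : |(K u - K v) * c v ^ l| ≤ (CK : ℝ) * |u - v| * L ^ l := by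
    rw [abs_mul, abs_pow]
    apply mul_le_mul
    · have := hK_lip.dist_le_mul u v
      rwa [Real.dist_eq, Real.dist_eq] at this
    · exact pow_le_pow_left₀ (abs_nonneg _) (hcabs v) l
    · positivity
    · positivity
  calc |K u * (c u ^ l - c v ^ l) + (K u - K v) * c v ^ l|
      ≤ |K u * (c u ^ l - c v ^ l)| + |(K u - K v) * c v ^ l| := abs_add_le _ _
    _ ≤ CB * (l * L ^ (l - 1) * |u - v|) + (CK : ℝ) * |u - v| * L ^ l := by linarith
    _ = ((CK : ℝ) * L ^ l + CB * l * L ^ (l - 1)) * |u - v| := by ring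


lemma riemann_est (f : ℝ → ℝ) (hfc : Continuous f) (L Cf : ℝ) (hL : 0 < L) (hCf : 0 ≤ Cf)
    (hflip : ∀ u v : ℝ, |f u - f v| ≤ Cf * |u - v|)
    (hsupp : ∀ u : ℝ, L ≤ |u| → f u = 0)
    (n : ℕ) (hn : 1 ≤ n) (b : ℝ) (hb : 0 < b) (hnb : 1 ≤ (n : ℝ) * b)
    (t : ℝ) (ht : t ∈ Set.Icc (0:ℝ) 1) :
    |(n : ℝ)⁻¹ * ∑ j ∈ Finset.Icc 1 n, f (((j : ℝ) / n - t) / b) / b -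
        ∫ u in (-t / b)..((1 - t) / b), f u| ≤ Cf * (2 * L + 2) / ((n : ℝ) * b) := by
  classical
  have hnR : (1:ℝ) ≤ (n:ℝ) := by exact_mod_cast hn
  have hn0 : (0:ℝ) < (n:ℝ) := lt_of_lt_of_le zero_lt_one hnR
  set g : ℝ → ℝ := fun x => f ((x - t) / b) / b with hg
  have hgc : Continuous g := ((hfc.comp ((continuous_id.sub continuous_const).div_const b)).div_const b)
  have hglip : ∀ x y : ℝ, |g x - g y| ≤ Cf / b ^ 2 * |x - y| := by
    intro x y
    have h1 : g x - g y = (f ((x - t) / b) - f ((y - t) / b)) / b := by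
      simp only [hg]; ring
    rw [h1, abs_div, abs_of_pos hb]
    have h2 := hflip ((x - t) / b) ((y - t) / b)
    have h3 : (x - t) / b - (y - t) / b = (x - y) / b := by ring
    rw [h3, abs_div, abs_of_pos hb] at h2
    calc |f ((x - t) / b) - f ((y - t) / b)| / b ≤ (Cf * (|x - y| / b)) / b := by gcongr
      _ = Cf / b ^ 2 * |x - y| := by ring
  have hgsupp : ∀ x : ℝ, b * L ≤ |x - t| → g x = 0 := by
    intro x hx
    have : L ≤ |(x - t) / b| := by
      rw [abs_div, abs_of_pos hb, le_div_iff₀ hb]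
      linarith [hx]
    simp only [hg, hsupp _ this, zero_div]
  have hbL : 0 < b * L := mul_pos hb hL
  set a : ℕ → ℝ := fun i => (i : ℝ) / n with ha
  have ha0 : ∀ i : ℕ, a i = (i : ℝ) / n := fun i => rfl
  have hgap : ∀ i : ℕ, a (i + 1) - a i = (n : ℝ)⁻¹ := by
    intro i; rw [ha0, ha0]; push_cast; field_simp; ring
  have hord : ∀ i : ℕ, a i ≤ a (i + 1) := by
    intro i
    have h1 := hgap i
    have h2 : (0:ℝ) ≤ (n : ℝ)⁻¹ := by positivity
    linarith
  have hint : ∀ p q : ℝ, IntervalIntegrable g volume p q := fun p q => hgc.intervalIntegrable p q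
  have hsum_int : ∑ i ∈ Finset.range n, ∫ x in a i..a (i + 1), g x = ∫ x in (0:ℝ)..1, g x := by
    rw [intervalIntegral.sum_integral_adjacent_intervals (fun k _ => hint (a k) (a (k + 1)))]
    have h0 : a 0 = 0 := by rw [ha0]; simp
    have h1 : a n = 1 := by rw [ha0]; exact div_self hn0.ne'
    rw [h0, h1]
  have hreindex : ∑ j ∈ Finset.Icc 1 n, g ((j : ℝ) / n) = ∑ i ∈ Finset.range n, g (((i : ℝ) + 1) / n) := by
    rw [← Finset.Ico_add_one_right_eq_Icc, Finset.sum_Ico_eq_sum_range]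
    norm_num
    refine Finset.sum_congr rfl fun i _ => ?_
    congr 1
    push_cast; ring
  set e : ℕ → ℝ := fun i => (n : ℝ)⁻¹ * g (((i : ℝ) + 1) / n) - ∫ x in a i..a (i + 1), g x with he
  have hdecomp : (n : ℝ)⁻¹ * ∑ j ∈ Finset.Icc 1 n, g ((j : ℝ) / n) - ∫ x in (0:ℝ)..1, g x
      = ∑ i ∈ Finset.range n, e i := by
    rw [hreindex, Finset.mul_sum, ← hsum_int, ← Finset.sum_sub_distrib]
  have herep : ∀ i : ℕ, e i = ∫ x in a i..a (i + 1), (g (((i : ℝ) + 1) / n) - g x) := by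
    intro i
    rw [intervalIntegral.integral_sub (intervalIntegrable_const) (hint _ _),
      intervalIntegral.integral_const, smul_eq_mul, hgap i, he]
  have ha1 : ∀ i : ℕ, a (i + 1) = ((i : ℝ) + 1) / n := by
    intro i; simp only [ha]; push_cast; ring
  have hebound : ∀ i : ℕ, |e i| ≤ Cf / (b ^ 2 * (n : ℝ) ^ 2) := by
    intro i
    rw [herep i]
    have hC : ∀ x ∈ Set.uIoc (a i) (a (i + 1)), ‖g (((i : ℝ) + 1) / n) - g x‖ ≤ Cf / b ^ 2 * (n : ℝ)⁻¹ := by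
      intro x hx
      rw [Set.uIoc_of_le (hord i)] at hx
      rw [Real.norm_eq_abs]
      refine (hglip _ _).trans ?_
      refine mul_le_mul_of_nonneg_left ?_ (by positivity)
      have h1 : a i < x := hx.1
      have h2 : x ≤ a (i + 1) := hx.2
      rw [ha1 i] at h2
      have h3 : ((i : ℝ) + 1) / n - (i : ℝ) / n = (n : ℝ)⁻¹ := by field_simp; ring
      rw [abs_le]
      constructor
      · have : (0:ℝ) < (n:ℝ)⁻¹ := by positivity
        linarith
      · simp only [ha] at h1
        linarith
    have hle := intervalIntegral.norm_integral_le_of_norm_le_const hC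
    rw [Real.norm_eq_abs] at hle
    refine hle.trans (le_of_eq ?_)
    have : |a (i + 1) - a i| = (n : ℝ)⁻¹ := by
      rw [hgap i, abs_of_pos (by positivity)]
    rw [this]; ring
  set P : ℕ → Prop := fun i => t - b * L ≤ ((i : ℝ) + 1) / n ∧ (i : ℝ) / n ≤ t + b * L with hP
  have hezero : ∀ i : ℕ, ¬ P i → e i = 0 := by
    intro i hPi
    rw [herep i]
    have hall : Set.EqOn (fun x => g (((i : ℝ) + 1) / n) - g x) (fun _ => (0:ℝ))
        (Set.uIcc (a i) (a (i + 1))) := by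
      intro x hx
      rw [Set.uIcc_of_le (hord i)] at hx
      simp only [hP, not_and_or, not_le] at hPi
      rcases hPi with h | h
      · have hg1 : g (((i : ℝ) + 1) / n) = 0 := by
          apply hgsupp
          rw [abs_of_nonpos (by linarith)]
          linarith
        have hg2 : g x = 0 := by
          apply hgsupp
          have hx2 : x ≤ ((i : ℝ) + 1) / n := by rw [← ha1 i]; exact hx.2
          have hun : (0:ℝ) < b * L := hbL
          rw [abs_of_nonpos (by linarith)]
          linarith
        simp [hg1, hg2]
      · have hg1 : g (((i : ℝ) + 1) / n) = 0 := by
          apply hgsupp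
          have hthis : (i : ℝ) / n ≤ ((i : ℝ) + 1) / n := by
            rw [← ha1 i, ← ha0 i]; exact hord i
          rw [abs_of_nonneg (by linarith)]
          linarith
        have hg2 : g x = 0 := by
          apply hgsupp
          have hx1 : (i : ℝ) / n ≤ x := hx.1
          rw [abs_of_nonneg (by linarith)]
          linarith
        simp [hg1, hg2]
    rw [intervalIntegral.integral_congr hall, intervalIntegral.integral_const]
    simp
  set m : ℕ := ⌈(n : ℝ) * (t - b * L)⌉₊ - 1 with hm
  set M : ℕ := ⌊(n : ℝ) * (t + b * L)⌋₊ with hM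
  have hsubset : (Finset.range n).filter P ⊆ Finset.Icc m M := by
    intro i hi
    rw [Finset.mem_filter] at hi
    obtain ⟨h1, h2⟩ := hi.2
    rw [Finset.mem_Icc]
    constructor
    · have hsle : (n : ℝ) * (t - b * L) ≤ (i : ℝ) + 1 := by
        rw [mul_comm]
        exact (le_div_iff₀ hn0).mp h1 |>.trans_eq (by ring) |>.trans_eq rfl
      have hceil : ⌈(n : ℝ) * (t - b * L)⌉₊ ≤ i + 1 := Nat.ceil_le.mpr (by push_cast; linarith)
      omega
    · have : (i : ℝ) ≤ (n : ℝ) * (t + b * L) := by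
        have := (div_le_iff₀ hn0).mp h2
        linarith [this]
      exact Nat.le_floor this
  have hcard : (((Finset.range n).filter P).card : ℝ) ≤ 2 * (n : ℝ) * b * L + 2 := by
    have h1 : (((Finset.range n).filter P).card : ℝ) ≤ ((Finset.Icc m M).card : ℝ) := by
      exact_mod_cast Finset.card_le_card hsubset
    refine h1.trans ?_
    rw [Nat.card_Icc]
    have hMle : (M : ℝ) ≤ (n : ℝ) * (t + b * L) :=
      Nat.floor_le (mul_nonneg hn0.le (by nlinarith [ht.1, hb, hL]))
    have hmge : (n : ℝ) * (t - b * L) - 1 ≤ (m : ℝ) := by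
      rcases Nat.eq_zero_or_pos ⌈(n : ℝ) * (t - b * L)⌉₊ with h | h
      · have hle0 : (n : ℝ) * (t - b * L) ≤ 0 := by
          by_contra hc
          push_neg at hc
          exact absurd h (Nat.ceil_pos.mpr hc).ne'
        have : m = 0 := by omega
        rw [this]
        simp
        linarith
      · have hcast : (m : ℝ) = (⌈(n : ℝ) * (t - b * L)⌉₊ : ℝ) - 1 := by
          rw [hm, Nat.cast_sub h]
          simp
        rw [hcast]
        linarith [Nat.le_ceil ((n : ℝ) * (t - b * L))]
    rcases le_or_gt m (M + 1) with h | h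
    · rw [Nat.cast_sub h]
      push_cast
      nlinarith
    · rw [Nat.sub_eq_zero_of_le h.le]
      have : (0:ℝ) ≤ 2 * (n : ℝ) * b * L := by positivity
      simp
      linarith
  show |(n : ℝ)⁻¹ * ∑ j ∈ Finset.Icc 1 n, g ((j : ℝ) / n) -
    ∫ u in (-t / b)..((1 - t) / b), f u| ≤ Cf * (2 * L + 2) / ((n : ℝ) * b)
  have hsub : ∫ x in (0:ℝ)..1, g x = ∫ u in (-t / b)..((1 - t) / b), f u := by
    have hfun : g = fun x => f (x / b - t / b) * b⁻¹ := by
      funext x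
      show f ((x - t) / b) / b = f (x / b - t / b) * b⁻¹
      rw [sub_div, div_eq_mul_inv]
    rw [hfun, intervalIntegral.integral_mul_const,
      intervalIntegral.integral_comp_div_sub f hb.ne' (t / b), smul_eq_mul]
    have e1 : (0:ℝ) / b - t / b = -t / b := by rw [zero_div, zero_sub, neg_div]
    have e2 : (1:ℝ) / b - t / b = (1 - t) / b := (sub_div 1 t b).symm
    rw [e1, e2]
    field_simp
  rw [← hsub, hdecomp]
  calc |∑ i ∈ Finset.range n, e i| ≤ ∑ i ∈ Finset.range n, |e i| :=
        Finset.abs_sum_le_sum_abs _ _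
    _ = ∑ i ∈ (Finset.range n).filter P, |e i| := by
        refine (Finset.sum_filter_of_ne ?_).symm
        intro i _ hne
        by_contra hPi
        exact hne (by rw [hezero i hPi]; simp)
    _ ≤ ((Finset.range n).filter P).card • (Cf / (b ^ 2 * (n : ℝ) ^ 2)) :=
        Finset.sum_le_card_nsmul _ _ _ (fun i _ => hebound i)
    _ = (((Finset.range n).filter P).card : ℝ) * (Cf / (b ^ 2 * (n : ℝ) ^ 2)) := nsmul_eq_mul _ _
    _ ≤ (2 * (n : ℝ) * b * L + 2) * (Cf / (b ^ 2 * (n : ℝ) ^ 2)) :=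
        mul_le_mul_of_nonneg_right hcard (by positivity)
    _ ≤ ((2 * L + 2) * ((n : ℝ) * b)) * (Cf / (b ^ 2 * (n : ℝ) ^ 2)) := by
        refine mul_le_mul_of_nonneg_right ?_ (by positivity)
        nlinarith
    _ = Cf * (2 * L + 2) / ((n : ℝ) * b) := by
        field_simp


theorem statement8 (K : ℝ → ℝ) (L : ℝ) (hL : 0 < L)
    (hK_symm : ∀ t, K (-t) = K t) (CK : NNReal) (hK_lip : LipschitzWith CK K)
    (CB : ℝ) (hK_bdd : ∀ t, K t ≤ CB)
    (hK_nonneg : ∀ t, 0 ≤ K t) (hK_supp : ∀ t, L < |t| → K t = 0)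
    (hK_int : ∫ t, K t = 1)
    (l : ℕ) :
    ∃ C' : ℝ,
      (∀ n : ℕ, 1 ≤ n → ∀ b : ℝ, 0 < b → b ≤ 1 → 1 ≤ (n : ℝ) * b →
        ∀ t ∈ Set.Icc (0 : ℝ) 1,
          |(n : ℝ)⁻¹ * ∑ j ∈ Finset.Icc 1 n,
                (K (((j : ℝ) / n - t) / b) / b) * (((j : ℝ) / n - t) / b) ^ l -
              ∫ u in (-t / b)..((1 - t) / b), K u * u ^ l| ≤
            C' / ((n : ℝ) * b)) ∧
      (∀ n : ℕ, 1 ≤ n → ∀ b : ℝ, 0 < b → b ≤ 1 → 1 ≤ (n : ℝ) * b →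
        ∀ i ∈ Finset.Icc 1 n, (n : ℝ) * b * L ≤ (i : ℝ) → (i : ℝ) ≤ n - (n : ℝ) * b * L →
          |(n : ℝ)⁻¹ * ∑ j ∈ Finset.Icc 1 n,
                (K (((j : ℝ) / n - (i : ℝ) / n) / b) / b) * ((j : ℝ) / n - (i : ℝ) / n) ^ l -
              b ^ l * ∫ u in (-L)..L, K u * u ^ l| ≤
            b ^ l * (C' / ((n : ℝ) * b))) := by
  have hCB : (0:ℝ) ≤ CB := le_trans (hK_nonneg 0) (hK_bdd 0)
  have hKL : K L = 0 := by
    have hsmall : ∀ d : ℝ, 0 < d → K L ≤ (CK : ℝ) * d := by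
      intro d hd
      have h1 := hK_lip.dist_le_mul L (L + d)
      rw [Real.dist_eq, Real.dist_eq] at h1
      have h0 : K (L + d) = 0 := by
        apply hK_supp
        rw [abs_of_pos (by linarith)]
        linarith
      rw [h0, sub_zero] at h1
      have h2 : |L - (L + d)| = d := by
        rw [abs_of_nonpos (by linarith)]; ring
      rw [h2] at h1
      exact (le_abs_self _).trans h1
    have hle : K L ≤ 0 := by
      refine le_of_forall_pos_le_add fun ε hε => ?_
      have := hsmall (ε / ((CK : ℝ) + 1)) (by positivity)
      have hCK : (0:ℝ) ≤ (CK : ℝ) := CK.coe_nonneg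
      have h3 : (CK : ℝ) * (ε / ((CK : ℝ) + 1)) ≤ ε := by
        rw [mul_div_assoc']
        rw [div_le_iff₀ (by positivity)]
        nlinarith
      linarith
    exact le_antisymm hle (hK_nonneg L)
  have hK0 : ∀ u : ℝ, L ≤ |u| → K u = 0 := by
    intro u hu
    rcases lt_or_eq_of_le hu with h | h
    · exact hK_supp u h
    · rcases abs_eq (le_of_lt hL) |>.mp h.symm with h1 | h1
      · rw [h1]; exact hKL
      · rw [h1, show (-L : ℝ) = -L from rfl, hK_symm]; exact hKL
  set f : ℝ → ℝ := fun u => K u * u ^ l with hf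
  have hfc : Continuous f := (hK_lip.continuous).mul (continuous_pow l)
  set Cf : ℝ := (CK : ℝ) * L ^ l + CB * l * L ^ (l - 1) with hCf
  have hCfpos : 0 ≤ Cf := by positivity
  have hflip : ∀ u v : ℝ, |f u - f v| ≤ Cf * |u - v| :=
    f_lip hL CK hK_lip hK_bdd hK_nonneg hK_supp l
  have hfsupp : ∀ u : ℝ, L ≤ |u| → f u = 0 := by
    intro u hu
    simp only [hf, hK0 u hu, zero_mul]
  set C' : ℝ := Cf * (2 * L + 2) with hC'
  have part1 : ∀ n : ℕ, 1 ≤ n → ∀ b : ℝ, 0 < b → b ≤ 1 → 1 ≤ (n : ℝ) * b →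
      ∀ t ∈ Set.Icc (0 : ℝ) 1,
        |(n : ℝ)⁻¹ * ∑ j ∈ Finset.Icc 1 n,
              (K (((j : ℝ) / n - t) / b) / b) * (((j : ℝ) / n - t) / b) ^ l -
            ∫ u in (-t / b)..((1 - t) / b), K u * u ^ l| ≤
          C' / ((n : ℝ) * b) := by
    intro n hn b hb hb1 hnb t ht
    have hR := riemann_est f hfc L Cf hL hCfpos hflip hfsupp n hn b hb hnb t ht
    have hsum_eq : ∑ j ∈ Finset.Icc 1 n,
        (K (((j : ℝ) / n - t) / b) / b) * (((j : ℝ) / n - t) / b) ^ l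
        = ∑ j ∈ Finset.Icc 1 n, f (((j : ℝ) / n - t) / b) / b := by
      refine Finset.sum_congr rfl fun j _ => ?_
      show _ = K (((j : ℝ) / n - t) / b) * (((j : ℝ) / n - t) / b) ^ l / b
      ring
    rw [hsum_eq]
    exact hR
  have hintf : ∀ p q : ℝ, IntervalIntegrable f volume p q := fun p q => hfc.intervalIntegrable p q
  have hI : ∀ a d : ℝ, a ≤ -L → L ≤ d →
      (∫ u in a..d, K u * u ^ l) = ∫ u in (-L)..L, K u * u ^ l := by
    intro a d haL hLd
    show (∫ u in a..d, f u) = ∫ u in (-L)..L, f u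
    have h1 : (∫ u in a..(-L), f u) = 0 := by
      have heq : Set.EqOn f (fun _ => (0:ℝ)) (Set.uIcc a (-L)) := by
        intro x hx
        rw [Set.uIcc_of_le haL] at hx
        have : L ≤ |x| := by
          rw [abs_of_nonpos (by linarith [hx.2])]
          linarith [hx.2]
        exact hfsupp x this
      rw [intervalIntegral.integral_congr heq]
      simp
    have h2 : (∫ u in L..d, f u) = 0 := by
      have heq : Set.EqOn f (fun _ => (0:ℝ)) (Set.uIcc L d) := by
        intro x hx
        rw [Set.uIcc_of_le hLd] at hx
        have : L ≤ |x| := by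
          rw [abs_of_nonneg (by linarith [hx.1])]
          exact hx.1
        exact hfsupp x this
      rw [intervalIntegral.integral_congr heq]
      simp
    have h3 := intervalIntegral.integral_add_adjacent_intervals (hintf a (-L)) (hintf (-L) d)
    have h4 := intervalIntegral.integral_add_adjacent_intervals (hintf (-L) L) (hintf L d)
    linarith [h1, h2, h3, h4]
  refine ⟨C', part1, ?_⟩
  intro n hn b hb hb1 hnb i hi hil hir
  obtain ⟨hi1, hin⟩ := Finset.mem_Icc.mp hi
  have hnR : (1:ℝ) ≤ (n : ℝ) := by exact_mod_cast hn
  have hn0 : (0:ℝ) < (n : ℝ) := lt_of_lt_of_le zero_lt_one hnR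
  have ht : (i : ℝ) / n ∈ Set.Icc (0:ℝ) 1 := by
    constructor
    · positivity
    · rw [div_le_one hn0]; exact_mod_cast hin
  have h1 := part1 n hn b hb hb1 hnb ((i : ℝ) / n) ht
  have ha : -((i : ℝ) / n) / b ≤ -L := by
    rw [neg_div, neg_le_neg_iff, le_div_iff₀ hb]
    rw [le_div_iff₀ hn0]
    nlinarith [hil]
  have hd : L ≤ (1 - (i : ℝ) / n) / b := by
    rw [le_div_iff₀ hb]
    have h5 : (i : ℝ) / n ≤ 1 - L * b := by
      rw [div_le_iff₀ hn0]
      nlinarith [hir]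
    linarith
  rw [hI (-((i : ℝ) / n) / b) ((1 - (i : ℝ) / n) / b) ha hd] at h1
  have hsum2 : ∑ j ∈ Finset.Icc 1 n,
      (K (((j : ℝ) / n - (i : ℝ) / n) / b) / b) * ((j : ℝ) / n - (i : ℝ) / n) ^ l
      = b ^ l * ∑ j ∈ Finset.Icc 1 n,
        (K (((j : ℝ) / n - (i : ℝ) / n) / b) / b) * (((j : ℝ) / n - (i : ℝ) / n) / b) ^ l := by
    rw [Finset.mul_sum]
    refine Finset.sum_congr rfl fun j _ => ?_
    have hx : ((j : ℝ) / n - (i : ℝ) / n) = (((j : ℝ) / n - (i : ℝ) / n) / b) * b := by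
      field_simp
    rw [hx]
    rw [mul_pow]
    have hxb : (((j : ℝ) / n - (i : ℝ) / n) / b) * b / b = ((j : ℝ) / n - (i : ℝ) / n) / b := by
      field_simp
    rw [hxb]
    ring
  rw [hsum2]
  have hfact : (n : ℝ)⁻¹ * (b ^ l * ∑ j ∈ Finset.Icc 1 n,
        (K (((j : ℝ) / n - (i : ℝ) / n) / b) / b) * (((j : ℝ) / n - (i : ℝ) / n) / b) ^ l)
      - b ^ l * ∫ u in (-L)..L, K u * u ^ l
      = b ^ l * ((n : ℝ)⁻¹ * (∑ j ∈ Finset.Icc 1 n,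
        (K (((j : ℝ) / n - (i : ℝ) / n) / b) / b) * (((j : ℝ) / n - (i : ℝ) / n) / b) ^ l)
      - ∫ u in (-L)..L, K u * u ^ l) := by ring
  rw [hfact, abs_mul, abs_of_nonneg (le_of_lt (pow_pos hb l))]
  exact mul_le_mul_of_nonneg_left h1 (le_of_lt (pow_pos hb l))
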